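/- arXiv:0911.2385 — 2 statements merged into one kernel-verified Lean document; each statement's English description precedes it below -/
import Mathlib

section
/- There exists a > 0 such that the supremum over all even L ∈ ℕ of the exponential moment E_W[exp(a · r^L · τ_1^{(L)})] is finite. -/
open MeasureTheory ProbabilityTheory

/-- The alternating pattern `(+, −, +, −, …)`: `0` codes `+`, `1` codes `−`, `2` codes `0`. -/
def altPat (j : ℕ) : Fin 3 := if j % 2 = 0 then 0 else 1

/-- The first regeneration time `τ₁^{(L)}`:
the first `n > L` such that `(ε_{n−L}, …, ε_{n−1})` equals the alternating word of length `L`. -/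
noncomputable def tau1 (L : ℕ) (ε : ℕ → Fin 3) : ℕ :=
  sInf {n : ℕ | L < n ∧ ∀ j < L, ε (n - L + j) = altPat j}


section
open Set
lemma bonferroni {Ω : Type*} [MeasurableSpace Ω] (μ : Measure Ω) (A : ℕ → Set Ω)
    (hA : ∀ s, MeasurableSet (A s)) (S : Finset ℕ) :
    ∑ s ∈ S, μ (A s) ≤ μ (⋃ s ∈ S, A s) + ∑ s ∈ S, ∑ t ∈ S.erase s, μ (A s ∩ A t) := by
  induction S using Finset.induction_on with
  | empty => simp
  | @insert a S ha IH =>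
    have hU : MeasurableSet (⋃ s ∈ S, A s) := S.measurableSet_biUnion (fun s _ => hA s)
    have key : μ (A a) + μ (⋃ s ∈ S, A s)
        = μ (A a ∪ ⋃ s ∈ S, A s) + μ (A a ∩ ⋃ s ∈ S, A s) :=
      (measure_union_add_inter (A a) hU).symm
    have hinter : μ (A a ∩ ⋃ s ∈ S, A s) ≤ ∑ s ∈ S, μ (A a ∩ A s) := by
      rw [Set.inter_iUnion₂]
      exact measure_biUnion_finset_le S _
    have hpair : ∑ t ∈ S, μ (A a ∩ A t)
          + ∑ s ∈ S, ∑ t ∈ S.erase s, μ (A s ∩ A t)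
        ≤ ∑ s ∈ insert a S, ∑ t ∈ (insert a S).erase s, μ (A s ∩ A t) := by
      rw [Finset.sum_insert ha, Finset.erase_insert ha]
      refine add_le_add le_rfl (Finset.sum_le_sum fun s hs => ?_)
      have hne : a ≠ s := fun h => ha (h ▸ hs)
      rw [Finset.erase_insert_of_ne hne, Finset.sum_insert (fun h => ha (Finset.mem_of_mem_erase h))]
      exact le_add_self
    calc ∑ s ∈ insert a S, μ (A s) = μ (A a) + ∑ s ∈ S, μ (A s) := Finset.sum_insert ha
      _ ≤ μ (A a) + (μ (⋃ s ∈ S, A s) + ∑ s ∈ S, ∑ t ∈ S.erase s, μ (A s ∩ A t)) :=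
          add_le_add le_rfl IH
      _ = (μ (A a) + μ (⋃ s ∈ S, A s)) + ∑ s ∈ S, ∑ t ∈ S.erase s, μ (A s ∩ A t) := by ring
      _ = (μ (A a ∪ ⋃ s ∈ S, A s) + μ (A a ∩ ⋃ s ∈ S, A s))
            + ∑ s ∈ S, ∑ t ∈ S.erase s, μ (A s ∩ A t) := by rw [key]
      _ ≤ μ (A a ∪ ⋃ s ∈ S, A s) + (∑ t ∈ S, μ (A a ∩ A t)
            + ∑ s ∈ S, ∑ t ∈ S.erase s, μ (A s ∩ A t)) := by
          rw [← add_assoc]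
          exact add_le_add (add_le_add le_rfl hinter) le_rfl
      _ ≤ μ (⋃ s ∈ insert a S, A s) + ∑ s ∈ insert a S, ∑ t ∈ (insert a S).erase s, μ (A s ∩ A t) := by
          rw [Finset.set_biUnion_insert]
          exact add_le_add le_rfl hpair

lemma geom_tail {r : ℝ} (h0 : 0 ≤ r) (h4 : r ≤ 1/4) (n : ℕ) :
    ∑ i ∈ Finset.range n, r ^ (i + 1) ≤ 1/3 := by
  have h1 : ∀ i ∈ Finset.range n, r ^ (i+1) ≤ (1/4:ℝ) ^ (i+1) :=
    fun i _ => pow_le_pow_left₀ h0 h4 _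
  have h2 : ∑ i ∈ Finset.range n, (1/4:ℝ) ^ (i+1) = (1/4) * ∑ i ∈ Finset.range n, (1/4:ℝ) ^ i := by
    rw [Finset.mul_sum]; exact Finset.sum_congr rfl fun i _ => by ring
  have h3 : ∑ i ∈ Finset.range n, (1/4:ℝ) ^ i = ((1/4:ℝ) ^ n - 1) / ((1/4) - 1) :=
    geom_sum_eq (by norm_num) n
  have h5 : (0:ℝ) ≤ (1/4:ℝ)^n := by positivity
  calc ∑ i ∈ Finset.range n, r ^ (i+1) ≤ ∑ i ∈ Finset.range n, (1/4:ℝ) ^ (i+1) :=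
        Finset.sum_le_sum h1
    _ = (1/4) * (((1/4:ℝ) ^ n - 1) / ((1/4) - 1)) := by rw [h2, h3]
    _ = (1 - (1/4:ℝ) ^ n) / 3 := by field_simp; ring
    _ ≤ 1/3 := by linarith

lemma erase_range_split (L s : ℕ) (hs : s < L + 1) :
    (Finset.range (L+1)).erase s = Finset.range s ∪ Finset.Ico (s+1) (L+1) := by
  ext t
  simp only [Finset.mem_erase, Finset.mem_range, Finset.mem_union, Finset.mem_Ico]
  omega

lemma inner_pair_sum {r : ℝ} (h0 : 0 ≤ r) (h4 : r ≤ 1/4) (L s : ℕ) (hs : s < L + 1) :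
    ∑ t ∈ (Finset.range (L+1)).erase s, r ^ (L + (if s < t then t - s else s - t))
      ≤ r ^ L * (2/3) := by
  rw [erase_range_split L s hs, Finset.sum_union]
  · have hA : ∑ t ∈ Finset.range s, r ^ (L + (if s < t then t - s else s - t))
        = ∑ j ∈ Finset.range s, r ^ (L + (j + 1)) := by
      rw [← Finset.sum_range_reflect]
      refine Finset.sum_congr rfl fun j hj => ?_
      simp only [Finset.mem_range] at hj
      congr 1
      rw [if_neg (by omega)]
      omega
    have hB : ∑ t ∈ Finset.Ico (s+1) (L+1), r ^ (L + (if s < t then t - s else s - t))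
        = ∑ j ∈ Finset.range (L - s), r ^ (L + (j + 1)) := by
      rw [Finset.sum_Ico_eq_sum_range]
      refine Finset.sum_congr (by congr 1; omega) fun j hj => ?_
      simp only [Finset.mem_range] at hj
      congr 1
      rw [if_pos (by omega)]
      omega
    have hgen : ∀ n : ℕ, ∑ j ∈ Finset.range n, r ^ (L + (j + 1)) ≤ r ^ L * (1/3) := by
      intro n
      have : ∑ j ∈ Finset.range n, r ^ (L + (j + 1)) = r ^ L * ∑ j ∈ Finset.range n, r ^ (j+1) := by
        rw [Finset.mul_sum]; exact Finset.sum_congr rfl fun j _ => by rw [pow_add]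
      rw [this]
      exact mul_le_mul_of_nonneg_left (geom_tail h0 h4 n) (pow_nonneg h0 _)
    rw [hA, hB]
    calc _ ≤ r ^ L * (1/3) + r ^ L * (1/3) := add_le_add (hgen s) (hgen (L - s))
      _ = r ^ L * (2/3) := by ring
  · rw [Finset.disjoint_left]
    intro t ht ht'
    simp only [Finset.mem_range] at ht
    simp only [Finset.mem_Ico] at ht'
    omega

def MatchAt (L t : ℕ) : Set (ℕ → Fin 3) := {ε | ∀ j < L, ε (t + j) = altPat j}

section
variable {W : Measure (ℕ → Fin 3)} {w : Measure (Fin 3)} {r : ℝ}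

lemma cyl (hiid : iIndepFun (fun i ε => ε i) W)
    (hmarg : ∀ i : ℕ, W.map (fun ε => ε i) = w)
    (S : Finset ℕ) (v : ℕ → Fin 3) :
    W {ε | ∀ i ∈ S, ε i = v i} = ∏ i ∈ S, w {v i} := by
  have h := hiid.measure_inter_preimage_eq_mul S (sets := fun i => {v i})
    (fun i _ => measurableSet_singleton _)
  have hset : {ε : ℕ → Fin 3 | ∀ i ∈ S, ε i = v i}
      = ⋂ i ∈ S, (fun ε : ℕ → Fin 3 => ε i) ⁻¹' {v i} := by
    ext ε; simp
  rw [hset, h]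
  refine Finset.prod_congr rfl fun i _ => ?_
  rw [← hmarg i, Measure.map_apply (measurable_pi_apply i) (measurableSet_singleton _)]

lemma w_altPat (hw0 : w {0} = ENNReal.ofReal r) (hw1 : w {1} = ENNReal.ofReal r) (j : ℕ) :
    w {altPat j} = ENNReal.ofReal r := by
  unfold altPat; split <;> simp [hw0, hw1]

lemma meas_match (hiid : iIndepFun (fun i ε => ε i) W)
    (hmarg : ∀ i : ℕ, W.map (fun ε => ε i) = w)
    (hw0 : w {0} = ENNReal.ofReal r) (hw1 : w {1} = ENNReal.ofReal r)
    (L t : ℕ) : W (MatchAt L t) = ENNReal.ofReal r ^ L := by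
  have hset : MatchAt L t
      = {ε : ℕ → Fin 3 | ∀ i ∈ (Finset.range L).image (t + ·), ε i = altPat (i - t)} := by
    ext ε
    simp only [MatchAt, mem_setOf_eq, Finset.mem_image, Finset.mem_range]
    constructor
    · rintro h i ⟨j, hj, rfl⟩
      simpa using h j hj
    · intro h j hj
      simpa using h (t + j) ⟨j, hj, rfl⟩
  rw [hset, cyl hiid hmarg]
  rw [Finset.prod_congr rfl (fun i _ => w_altPat hw0 hw1 (i - t)), Finset.prod_const,
    Finset.card_image_of_injective _ (add_right_injective t), Finset.card_range]

lemma sum_const_ofReal (n : ℕ) (z : ℝ) :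
    ∑ _s ∈ Finset.range n, ENNReal.ofReal z = ENNReal.ofReal ((n : ℝ) * z) := by
  rw [Finset.sum_const, Finset.card_range, nsmul_eq_mul,
    ENNReal.ofReal_mul (Nat.cast_nonneg n), ENNReal.ofReal_natCast]

lemma meas_pair (hiid : iIndepFun (fun i ε => ε i) W)
    (hmarg : ∀ i : ℕ, W.map (fun ε => ε i) = w)
    (hw0 : w {0} = ENNReal.ofReal r) (hw1 : w {1} = ENNReal.ofReal r)
    (L s d : ℕ) (hdL : d ≤ L) :
    W (MatchAt L s ∩ MatchAt L (s + d)) ≤ ENNReal.ofReal r ^ (L + d) := by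
  set S : Finset ℕ := ((Finset.range L).image (s + ·)) ∪ ((Finset.range d).image (s + L + ·))
    with hS
  set v : ℕ → Fin 3 := fun i => if i < s + L then altPat (i - s) else altPat (i - (s + d))
    with hv
  have hsub : MatchAt L s ∩ MatchAt L (s + d) ⊆ {ε | ∀ i ∈ S, ε i = v i} := by
    rintro ε ⟨h1, h2⟩ i hi
    simp only [MatchAt, mem_setOf_eq] at h1 h2
    simp only [hS, Finset.mem_union, Finset.mem_image, Finset.mem_range] at hi
    rcases hi with ⟨j, hj, rfl⟩ | ⟨m, hm, rfl⟩
    · have h := h1 j hj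
      simp only [hv]
      rw [if_pos (by omega)]
      have : s + j - s = j := by omega
      rw [this]; exact h
    · have hj' : L - d + m < L := by omega
      have h := h2 (L - d + m) hj'
      have harg : s + d + (L - d + m) = s + L + m := by omega
      rw [harg] at h
      simp only [hv]
      rw [if_neg (by omega)]
      have : s + L + m - (s + d) = L - d + m := by omega
      rw [this]; exact h
  have hcard : S.card = L + d := by
    rw [hS, Finset.card_union_of_disjoint, Finset.card_image_of_injective _ (add_right_injective _),
      Finset.card_image_of_injective _ (add_right_injective _), Finset.card_range,
      Finset.card_range]
    rw [Finset.disjoint_left]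
    intro x hx hx'
    simp only [Finset.mem_image, Finset.mem_range] at hx hx'
    obtain ⟨j, hj, rfl⟩ := hx
    obtain ⟨m, hm, h⟩ := hx'
    omega
  calc W (MatchAt L s ∩ MatchAt L (s + d)) ≤ W {ε | ∀ i ∈ S, ε i = v i} := measure_mono hsub
    _ = ∏ i ∈ S, w {v i} := cyl hiid hmarg S v
    _ = ENNReal.ofReal r ^ (L + d) := by
        rw [Finset.prod_congr rfl (fun i _ => show w {v i} = ENNReal.ofReal r by
          simp only [hv]; split <;> exact w_altPat hw0 hw1 _), Finset.prod_const, hcard]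

lemma measurableSet_match (L t : ℕ) : MeasurableSet (MatchAt L t) := by
  have : MatchAt L t = ⋂ j ∈ Finset.range L, (fun ε : ℕ → Fin 3 => ε (t + j)) ⁻¹' {altPat j} := by
    ext ε; simp [MatchAt]
  rw [this]
  exact Finset.measurableSet_biInter _ fun j _ =>
    (measurable_pi_apply _) (measurableSet_singleton _)

def Blk (L b : ℕ) : Set (ℕ → Fin 3) := ⋃ s ∈ Finset.range (L+1), MatchAt L (b + s)

lemma measurableSet_blk (L b : ℕ) : MeasurableSet (Blk L b) :=
  (Finset.range (L+1)).measurableSet_biUnion fun s _ => measurableSet_match L (b + s)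

lemma blk_lb (hiid : iIndepFun (fun i ε => ε i) W)
    (hmarg : ∀ i : ℕ, W.map (fun ε => ε i) = w)
    (hw0 : w {0} = ENNReal.ofReal r) (hw1 : w {1} = ENNReal.ofReal r)
    (h0 : 0 ≤ r) (h4 : r ≤ 1/4) (L b : ℕ) :
    ENNReal.ofReal ((L : ℝ) * r ^ L / 3) ≤ W (Blk L b) := by
  have hbon := bonferroni W (fun s => MatchAt L (b + s))
    (fun s => measurableSet_match L (b + s)) (Finset.range (L+1))
  have hsum : ∑ s ∈ Finset.range (L+1), W (MatchAt L (b+s))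
      = ENNReal.ofReal (((L:ℝ)+1) * r ^ L) := by
    rw [Finset.sum_congr rfl (fun s _ => meas_match hiid hmarg hw0 hw1 L (b+s)),
      ← ENNReal.ofReal_pow h0, sum_const_ofReal]
    congr 1
    push_cast
    ring
  have hpairs : ∑ s ∈ Finset.range (L+1), ∑ t ∈ (Finset.range (L+1)).erase s,
      W (MatchAt L (b+s) ∩ MatchAt L (b+t)) ≤ ENNReal.ofReal (((L:ℝ)+1) * (r ^ L * (2/3))) := by
    have hper : ∀ s ∈ Finset.range (L+1), ∑ t ∈ (Finset.range (L+1)).erase s,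
        W (MatchAt L (b+s) ∩ MatchAt L (b+t)) ≤ ENNReal.ofReal (r ^ L * (2/3)) := by
      intro s hs
      simp only [Finset.mem_range] at hs
      have hterm : ∀ t ∈ (Finset.range (L+1)).erase s,
          W (MatchAt L (b+s) ∩ MatchAt L (b+t))
            ≤ ENNReal.ofReal (r ^ (L + (if s < t then t - s else s - t))) := by
        intro t ht
        simp only [Finset.mem_erase, Finset.mem_range] at ht
        rw [ENNReal.ofReal_pow h0]
        rcases lt_or_gt_of_ne (Ne.symm ht.1) with hlt | hgt
        · rw [if_pos hlt]
          have : b + t = (b + s) + (t - s) := by omega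
          rw [this]
          exact meas_pair hiid hmarg hw0 hw1 L (b+s) (t-s) (by omega)
        · rw [if_neg (by omega)]
          have : b + s = (b + t) + (s - t) := by omega
          rw [Set.inter_comm, this]
          exact meas_pair hiid hmarg hw0 hw1 L (b+t) (s-t) (by omega)
      calc ∑ t ∈ (Finset.range (L+1)).erase s, W (MatchAt L (b+s) ∩ MatchAt L (b+t))
          ≤ ∑ t ∈ (Finset.range (L+1)).erase s,
              ENNReal.ofReal (r ^ (L + (if s < t then t - s else s - t))) :=
            Finset.sum_le_sum hterm
        _ = ENNReal.ofReal (∑ t ∈ (Finset.range (L+1)).erase s,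
              r ^ (L + (if s < t then t - s else s - t))) :=
            (ENNReal.ofReal_sum_of_nonneg (fun t _ => by positivity)).symm
        _ ≤ ENNReal.ofReal (r ^ L * (2/3)) :=
            ENNReal.ofReal_le_ofReal (inner_pair_sum h0 h4 L s hs)
    calc ∑ s ∈ Finset.range (L+1), ∑ t ∈ (Finset.range (L+1)).erase s,
        W (MatchAt L (b+s) ∩ MatchAt L (b+t))
        ≤ ∑ s ∈ Finset.range (L+1), ENNReal.ofReal (r ^ L * (2/3)) := Finset.sum_le_sum hper
      _ = ENNReal.ofReal (((L:ℝ)+1) * (r ^ L * (2/3))) := by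
          rw [sum_const_ofReal]
          congr 1
          push_cast
          ring
  have hW : ENNReal.ofReal (((L:ℝ)+1) * r ^ L) ≤ W (Blk L b)
      + ENNReal.ofReal (((L:ℝ)+1) * (r ^ L * (2/3))) := by
    rw [← hsum]
    exact hbon.trans (add_le_add le_rfl hpairs)
  have hsub : ENNReal.ofReal (((L:ℝ)+1) * r ^ L)
      - ENNReal.ofReal (((L:ℝ)+1) * (r ^ L * (2/3))) ≤ W (Blk L b) :=
    tsub_le_iff_right.mpr hW
  calc ENNReal.ofReal ((L : ℝ) * r ^ L / 3)
      ≤ ENNReal.ofReal (((L:ℝ)+1) * r ^ L - ((L:ℝ)+1) * (r ^ L * (2/3))) := by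
        apply ENNReal.ofReal_le_ofReal
        have hL : (0:ℝ) ≤ L := Nat.cast_nonneg L
        have hrl : (0:ℝ) ≤ r ^ L := pow_nonneg h0 L
        nlinarith
    _ = ENNReal.ofReal (((L:ℝ)+1) * r ^ L) - ENNReal.ofReal (((L:ℝ)+1) * (r ^ L * (2/3))) :=
        ENNReal.ofReal_sub _ (by positivity)
    _ ≤ W (Blk L b) := hsub


lemma det_preimage {α β : Type*} (f : α → β) (E : Set α)
    (h : ∀ a a', f a = f a' → a ∈ E → a' ∈ E) : E = f ⁻¹' (f '' E) := by
  ext a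
  constructor
  · exact fun ha => ⟨a, ha, rfl⟩
  · rintro ⟨a', ha', hfa⟩
    exact h a' a hfa ha'

lemma indep_events (hiid : iIndepFun (fun i ε => ε i) W)
    (S T : Finset ℕ) (hST : Disjoint S T) (E F : Set (ℕ → Fin 3))
    (hE : ∀ ε ε' : ℕ → Fin 3, (∀ i ∈ S, ε i = ε' i) → ε ∈ E → ε' ∈ E)
    (hF : ∀ ε ε' : ℕ → Fin 3, (∀ i ∈ T, ε i = ε' i) → ε ∈ F → ε' ∈ F) :
    W (E ∩ F) = W E * W F := by
  have hind := hiid.indepFun_finset S T hST (fun i => measurable_pi_apply i)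
  set f : (ℕ → Fin 3) → (S → Fin 3) := fun ε i => ε i with hf
  set g : (ℕ → Fin 3) → (T → Fin 3) := fun ε i => ε i with hg
  have hEeq : E = f ⁻¹' (f '' E) :=
    det_preimage f E (fun a a' hfa => hE a a' (fun i hi => congrFun hfa ⟨i, hi⟩))
  have hFeq : F = g ⁻¹' (g '' F) :=
    det_preimage g F (fun a a' hga => hF a a' (fun i hi => congrFun hga ⟨i, hi⟩))
  have hmE : MeasurableSet (f '' E) := (f '' E).toFinite.measurableSet
  have hmF : MeasurableSet (g '' F) := (g '' F).toFinite.measurableSet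
  calc W (E ∩ F) = W (f ⁻¹' (f '' E) ∩ g ⁻¹' (g '' F)) := by rw [← hEeq, ← hFeq]
    _ = W (f ⁻¹' (f '' E)) * W (g ⁻¹' (g '' F)) :=
        hind.measure_inter_preimage_eq_mul _ _ hmE hmF
    _ = W E * W F := by rw [← hEeq, ← hFeq]

lemma blk_det (L b : ℕ) (ε ε' : ℕ → Fin 3)
    (h : ∀ i ∈ Finset.Ico b (b + 2*L), ε i = ε' i) (hε : ε ∈ Blk L b) : ε' ∈ Blk L b := by
  simp only [Blk, mem_iUnion, Finset.mem_range] at hε ⊢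
  obtain ⟨s, hs, hmatch⟩ := hε
  refine ⟨s, hs, fun j hj => ?_⟩
  rw [← h (b + s + j) (by rw [Finset.mem_Ico]; omega)]
  exact hmatch j hj

def Dset (L k : ℕ) : Set (ℕ → Fin 3) := ⋂ j ∈ Finset.Icc 1 k, (Blk L (2*L*j))ᶜ

lemma measurableSet_dset (L k : ℕ) : MeasurableSet (Dset L k) :=
  (Finset.Icc 1 k).measurableSet_biInter fun j _ => (measurableSet_blk L (2*L*j)).compl

lemma dset_det (L m : ℕ) (ε ε' : ℕ → Fin 3)
    (h : ∀ i ∈ Finset.Ico (2*L) (2*L*(m+1)), ε i = ε' i) (hε : ε ∈ Dset L m) :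
    ε' ∈ Dset L m := by
  simp only [Dset, mem_iInter, mem_compl_iff, Finset.mem_Icc] at hε ⊢
  intro j hj hblk'
  refine hε j hj (blk_det L (2*L*j) ε' ε (fun i hi => ?_) hblk')
  rw [Finset.mem_Ico] at hi
  exact (h i (by rw [Finset.mem_Ico]; constructor <;> nlinarith [hj.1, hj.2, hi.1, hi.2])).symm

lemma dset_bound (hWprob : IsProbabilityMeasure W)
    (hiid : iIndepFun (fun i ε => ε i) W)
    (hmarg : ∀ i : ℕ, W.map (fun ε => ε i) = w)
    (hw0 : w {0} = ENNReal.ofReal r) (hw1 : w {1} = ENNReal.ofReal r)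
    (h0 : 0 ≤ r) (h4 : r ≤ 1/4) (L : ℕ) (k : ℕ) :
    W (Dset L k) ≤ ENNReal.ofReal (1 - (L:ℝ) * r ^ L / 3) ^ k := by
  induction k with
  | zero =>
    simp [Dset]
  | succ m IH =>
    have hsplit : Dset L (m+1) = (Blk L (2*L*(m+1)))ᶜ ∩ Dset L m := by
      unfold Dset
      have : Finset.Icc 1 (m+1) = insert (m+1) (Finset.Icc 1 m) := by
        ext j; simp only [Finset.mem_Icc, Finset.mem_insert]; omega
      rw [this, Finset.set_biInter_insert]
    have hdisj : Disjoint (Finset.Ico (2*L*(m+1)) (2*L*(m+1) + 2*L)) (Finset.Ico (2*L) (2*L*(m+1))) := by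
      rw [Finset.disjoint_left]
      intro i hi hi'
      rw [Finset.mem_Ico] at hi hi'
      omega
    have hindep := indep_events hiid _ _ hdisj ((Blk L (2*L*(m+1)))ᶜ) (Dset L m)
      (fun ε ε' h hε => fun hblk' => hε (blk_det L (2*L*(m+1)) ε' ε (fun i hi => (h i hi).symm) hblk'))
      (fun ε ε' h hε => dset_det L m ε ε' h hε)
    have hcompl : W ((Blk L (2*L*(m+1)))ᶜ) ≤ ENNReal.ofReal (1 - (L:ℝ) * r ^ L / 3) := by
      rw [measure_compl (measurableSet_blk _ _) (measure_ne_top W _), measure_univ]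
      calc (1 : ENNReal) - W (Blk L (2*L*(m+1)))
          ≤ 1 - ENNReal.ofReal ((L:ℝ) * r ^ L / 3) :=
            tsub_le_tsub_left (blk_lb hiid hmarg hw0 hw1 h0 h4 L _) 1
        _ = ENNReal.ofReal (1 - (L:ℝ) * r ^ L / 3) := by
            rw [ENNReal.ofReal_sub _ (by positivity), ENNReal.ofReal_one]
    calc W (Dset L (m+1)) = W ((Blk L (2*L*(m+1)))ᶜ) * W (Dset L m) := by rw [hsplit, hindep]
      _ ≤ ENNReal.ofReal (1 - (L:ℝ) * r ^ L / 3) * ENNReal.ofReal (1 - (L:ℝ) * r ^ L / 3) ^ m :=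
          mul_le_mul' hcompl IH
      _ = ENNReal.ofReal (1 - (L:ℝ) * r ^ L / 3) ^ (m+1) := (pow_succ' _ _).symm


lemma tau_le_of_blk (L j : ℕ) (hL : 1 ≤ L) (hj : 1 ≤ j) (ε : ℕ → Fin 3)
    (hε : ε ∈ Blk L (2*L*j)) : tau1 L ε ≤ 2*L*(j+1) := by
  simp only [Blk, mem_iUnion, Finset.mem_range] at hε
  obtain ⟨s, hs, hmatch⟩ := hε
  have hmem : (2*L*j + s + L) ∈ {n : ℕ | L < n ∧ ∀ i < L, ε (n - L + i) = altPat i} := by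
    constructor
    · nlinarith
    · intro i hi
      have harg : 2*L*j + s + L - L + i = 2*L*j + s + i := by omega
      rw [harg]
      exact hmatch i hi
  have hle := Nat.sInf_le hmem
  unfold tau1
  calc sInf {n : ℕ | L < n ∧ ∀ i < L, ε (n - L + i) = altPat i} ≤ 2*L*j + s + L := hle
    _ ≤ 2*L*(j+1) := by
        have hexp : 2*L*(j+1) = 2*L*j + 2*L := by ring
        omega

lemma tau_mem_dset (L k : ℕ) (hL : 1 ≤ L) (ε : ℕ → Fin 3) (htau : 2*L*k < tau1 L ε) :
    ε ∈ Dset L (k-1) := by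
  simp only [Dset, mem_iInter, mem_compl_iff, Finset.mem_Icc] at *
  intro j hj hblk
  have h1 := tau_le_of_blk L j hL hj.1 ε hblk
  have h2 : 2*L*(j+1) ≤ 2*L*k := by
    have : j + 1 ≤ k := by omega
    exact Nat.mul_le_mul_left _ this
  omega

lemma layer (hWprob : IsProbabilityMeasure W) (L : ℕ) (hL : 1 ≤ L) (c : ℝ) (hc : 0 ≤ c) :
    ∫⁻ ε, ENNReal.ofReal (Real.exp (c * (tau1 L ε : ℝ))) ∂W
      ≤ 1 + ∑' k : ℕ, ENNReal.ofReal
          (Real.exp (c * (2*L) * (k+1)) - Real.exp (c * (2*L) * k)) * W (Dset L (k-1)) := by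
  set β : ℕ → ℝ := fun k => Real.exp (c * (2*L) * (k+1)) - Real.exp (c * (2*L) * k) with hβ
  have hβnn : ∀ k, 0 ≤ β k := by
    intro k
    simp only [hβ, sub_nonneg, Real.exp_le_exp]
    have : (0:ℝ) ≤ c * (2*L) := by positivity
    nlinarith
  set g : ℕ → (ℕ → Fin 3) → ENNReal := fun k ε =>
    ENNReal.ofReal (β k) * (Dset L (k-1)).indicator (fun _ => (1:ENNReal)) ε with hg
  have hgmeas : ∀ k, Measurable (g k) := fun k =>
    (measurable_const.indicator (measurableSet_dset L (k-1))).const_mul _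
  have hpt : ∀ ε : ℕ → Fin 3, ENNReal.ofReal (Real.exp (c * (tau1 L ε : ℝ)))
      ≤ 1 + ∑' k : ℕ, g k ε := by
    intro ε
    rcases Nat.eq_zero_or_pos (tau1 L ε) with h0 | hpos
    · rw [h0]
      simp only [Nat.cast_zero, mul_zero, Real.exp_zero, ENNReal.ofReal_one]
      exact le_add_right le_rfl
    · set n := tau1 L ε with hn
      set m := (n - 1) / (2*L) with hm
      have h2L : 0 < 2*L := by omega
      have hnle : n ≤ 2*L*(m+1) := by
        have h1 : 2*L*m + (n-1) % (2*L) = n - 1 := by rw [hm]; exact Nat.div_add_mod (n-1) (2*L)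
        have h2 : (n-1) % (2*L) < 2*L := Nat.mod_lt _ h2L
        have h3 : 2*L*(m+1) = 2*L*m + 2*L := by ring
        omega
      have hexp : Real.exp (c * (n : ℝ)) ≤ Real.exp (c * (2*L) * (m+1)) := by
        rw [Real.exp_le_exp]
        have hcast : (n:ℝ) ≤ (2*L:ℕ) * ((m:ℝ)+1) := by
          have := (Nat.cast_le (α := ℝ)).mpr hnle
          push_cast at this ⊢
          linarith
        push_cast at hcast ⊢
        nlinarith [hcast, hc]
      have htele : Real.exp (c * (2*L) * (m+1)) = 1 + ∑ k ∈ Finset.range (m+1), β k := by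
        have := Finset.sum_range_sub (fun k => Real.exp (c * (2*L) * k)) (m+1)
        rw [hβ]
        push_cast at this ⊢
        rw [this]
        simp [Real.exp_zero]
      have hfin : ∀ k ∈ Finset.range (m+1), ENNReal.ofReal (β k) = g k ε := by
        intro k hk
        simp only [Finset.mem_range] at hk
        have hmem : ε ∈ Dset L (k-1) := by
          apply tau_mem_dset L k hL
          have hdm : 2*L*m ≤ n - 1 := by
            have h1 := Nat.div_mul_le_self (n-1) (2*L)
            calc 2*L*m = (n-1)/(2*L) * (2*L) := by rw [hm]; ring
              _ ≤ n-1 := h1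
          calc 2*L*k ≤ 2*L*m := Nat.mul_le_mul_left _ (by omega)
            _ ≤ n - 1 := hdm
            _ < n := by omega
        simp only [hg, Set.indicator_of_mem hmem, mul_one]
      calc ENNReal.ofReal (Real.exp (c * (n : ℝ)))
          ≤ ENNReal.ofReal (Real.exp (c * (2*L) * (m+1))) := ENNReal.ofReal_le_ofReal hexp
        _ = ENNReal.ofReal (1 + ∑ k ∈ Finset.range (m+1), β k) := by rw [htele]
        _ = 1 + ENNReal.ofReal (∑ k ∈ Finset.range (m+1), β k) := by
            rw [ENNReal.ofReal_add (by norm_num) (Finset.sum_nonneg fun k _ => hβnn k),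
              ENNReal.ofReal_one]
        _ = 1 + ∑ k ∈ Finset.range (m+1), ENNReal.ofReal (β k) := by
            rw [ENNReal.ofReal_sum_of_nonneg (fun k _ => hβnn k)]
        _ = 1 + ∑ k ∈ Finset.range (m+1), g k ε := by
            rw [Finset.sum_congr rfl hfin]
        _ ≤ 1 + ∑' k : ℕ, g k ε := add_le_add le_rfl (ENNReal.sum_le_tsum _)
  calc ∫⁻ ε, ENNReal.ofReal (Real.exp (c * (tau1 L ε : ℝ))) ∂W
      ≤ ∫⁻ ε, (1 + ∑' k : ℕ, g k ε) ∂W := lintegral_mono hpt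
    _ = ∫⁻ _, (1:ENNReal) ∂W + ∫⁻ ε, ∑' k : ℕ, g k ε ∂W := lintegral_add_left measurable_const _
    _ = 1 + ∑' k : ℕ, ∫⁻ ε, g k ε ∂W := by
        rw [lintegral_const, measure_univ, mul_one, lintegral_tsum (fun k => (hgmeas k).aemeasurable)]
    _ = 1 + ∑' k : ℕ, ENNReal.ofReal
          (Real.exp (c * (2*L) * (k+1)) - Real.exp (c * (2*L) * k)) * W (Dset L (k-1)) := by
        congr 1
        refine tsum_congr fun k => ?_
        simp only [hg]
        rw [lintegral_const_mul _ (measurable_const.indicator (measurableSet_dset L (k-1))),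
          lintegral_indicator_const (measurableSet_dset L (k-1)), one_mul]

end


end

set_option maxHeartbeats 2000000 in
/-- there exists `a > 0` such that the exponential moments
`E_W[exp(a · r^L · τ₁^{(L)})]` are bounded uniformly over all (positive) even `L`. -/
theorem exp_moment_bound_regeneration_time
    (p : ℝ) (hp : 1 / 2 < p) (hp1 : p < 1)
    (r : ℝ) (hr : r = (1 - p) / 2)
    (w : Measure (Fin 3)) (hwprob : IsProbabilityMeasure w)
    (hw0 : w {0} = ENNReal.ofReal r) (hw1 : w {1} = ENNReal.ofReal r)
    (hw2 : w {2} = ENNReal.ofReal p)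
    (W : Measure (ℕ → Fin 3)) (hWprob : IsProbabilityMeasure W)
    (hiid : iIndepFun (fun i ε => ε i) W)
    (hmarg : ∀ i : ℕ, W.map (fun ε => ε i) = w) :
    ∃ a : ℝ, 0 < a ∧ ∃ M : ℝ, ∀ L : ℕ, Even L → 0 < L →
      ∫⁻ ε, ENNReal.ofReal (Real.exp (a * (r ^ L * (tau1 L ε : ℝ)))) ∂W ≤ ENNReal.ofReal M := by
  refine ⟨1/12, by norm_num, 7, ?_⟩
  intro L hLe hLpos
  have hr0 : 0 < r := by rw [hr]; linarith
  have hr4 : r ≤ 1/4 := by rw [hr]; linarith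
  have hL2 : 2 ≤ L := by
    rcases hLe with ⟨t, ht⟩
    omega
  have hx0 : 0 < (L:ℝ) * r ^ L :=
    mul_pos (by exact_mod_cast hLpos) (pow_pos hr0 L)
  have hxq : (L:ℝ) * r ^ L ≤ 1/4 := by
    have h1 : (L:ℝ) * r ^ L ≤ (L:ℝ) * (1/4:ℝ) ^ L := by
      apply mul_le_mul_of_nonneg_left _ (Nat.cast_nonneg L)
      exact pow_le_pow_left₀ hr0.le hr4 L
    have h2 : (L:ℝ) ≤ 2 ^ L := by
      have := Nat.lt_two_pow_self (n := L)
      exact_mod_cast this.le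
    have h3 : (L:ℝ) * (1/4:ℝ) ^ L ≤ (2:ℝ)^L * (1/4:ℝ)^L := by
      apply mul_le_mul_of_nonneg_right h2 (by positivity)
    have h4 : (2:ℝ)^L * (1/4:ℝ)^L = (1/2:ℝ)^L := by
      rw [← mul_pow]
      norm_num
    have h5 : (1/2:ℝ)^L ≤ (1/2:ℝ)^2 :=
      pow_le_pow_of_le_one (by norm_num) (by norm_num) hL2
    calc (L:ℝ) * r ^ L ≤ (2:ℝ)^L * (1/4:ℝ)^L := h1.trans h3
      _ = (1/2:ℝ)^L := h4
      _ ≤ (1/2:ℝ)^2 := h5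
      _ = 1/4 := by norm_num
  set c : ℝ := 1/12 * r ^ L with hcdef
  have hc0 : 0 ≤ c := by positivity
  have hstep1 : ∫⁻ ε, ENNReal.ofReal (Real.exp (1/12 * (r ^ L * (tau1 L ε : ℝ)))) ∂W
      = ∫⁻ ε, ENNReal.ofReal (Real.exp (c * (tau1 L ε : ℝ))) ∂W := by
    refine lintegral_congr fun ε => ?_
    rw [hcdef]
    ring_nf
  rw [hstep1]
  refine le_trans (layer hWprob L (by omega) c hc0) ?_
  set y : ℝ := c * (2*(L:ℝ)) with hydef
  have hy6 : y = ((L:ℝ) * r ^ L)/6 := by rw [hydef, hcdef]; ring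
  have hy0 : 0 < y := by rw [hy6]; linarith
  have hy24 : y ≤ 1/24 := by rw [hy6]; linarith
  have hEpos := Real.exp_pos y
  have hE1 : 1 ≤ Real.exp y := by nlinarith [Real.add_one_le_exp y]
  have h3 : (1 - y) * Real.exp y ≤ 1 := by
    have h1 := Real.add_one_le_exp (-y)
    rw [Real.exp_neg] at h1
    calc (1 - y) * Real.exp y ≤ (Real.exp y)⁻¹ * Real.exp y := by
          apply mul_le_mul_of_nonneg_right _ hEpos.le
          linarith
      _ = 1 := inv_mul_cancel₀ hEpos.ne'
  have hE2 : Real.exp y ≤ 2 := by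
    have h4 : y * Real.exp y ≤ (1/24) * Real.exp y :=
      mul_le_mul_of_nonneg_right hy24 hEpos.le
    nlinarith
  have hEm1 : Real.exp y - 1 ≤ ((L:ℝ) * r ^ L)/3 := by
    have h4 : y * Real.exp y ≤ y * 2 := mul_le_mul_of_nonneg_left hE2 hy0.le
    have h5 : Real.exp y - 1 ≤ y * Real.exp y := by nlinarith
    have h6 : y * 2 ≤ ((L:ℝ) * r ^ L)/3 := by rw [hy6]; linarith
    linarith
  have hN3 : Real.exp y * (1 - ((L:ℝ) * r ^ L)/3) ≤ Real.exp (-y) := by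
    have h5 := Real.add_one_le_exp (-(((L:ℝ) * r ^ L)/3))
    have h6 : Real.exp y * (1 - ((L:ℝ) * r ^ L)/3)
        ≤ Real.exp y * Real.exp (-(((L:ℝ) * r ^ L)/3)) :=
      mul_le_mul_of_nonneg_left (by linarith) hEpos.le
    rw [← Real.exp_add] at h6
    have harg : y + -(((L:ℝ) * r ^ L)/3) = -y := by rw [hy6]; ring
    rwa [harg] at h6
  have hN4 : Real.exp (-y) ≤ 1 - ((L:ℝ) * r ^ L)/7 := by
    have h6 := Real.add_one_le_exp y
    have h7 : (Real.exp y)⁻¹ ≤ (1+y)⁻¹ := by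
      apply inv_anti₀ (by linarith) (by linarith)
    have h8 : (1+y)⁻¹ ≤ 1 - ((L:ℝ) * r ^ L)/7 := by
      rw [← one_div]
      rw [div_le_iff₀ (by linarith)]
      rw [hy6]
      nlinarith
    rw [Real.exp_neg]
    exact h7.trans h8
  have hx3nn : (0:ℝ) ≤ 1 - ((L:ℝ) * r ^ L)/3 := by linarith
  have hAnn : (0:ℝ) ≤ (Real.exp y - 1) * Real.exp y := by nlinarith
  set q : ENNReal := ENNReal.ofReal (Real.exp (-y)) with hqdef
  set A : ENNReal := ENNReal.ofReal ((Real.exp y - 1) * Real.exp y) with hAdef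
  have hdsetb : ∀ k : ℕ, W (Dset L k) ≤ ENNReal.ofReal (1 - (L:ℝ) * r ^ L / 3) ^ k :=
    fun k => dset_bound hWprob hiid hmarg hw0 hw1 hr0.le hr4 L k
  have hterm : ∀ k : ℕ,
      ENNReal.ofReal (Real.exp (y * ((↑(k+1):ℝ)+1)) - Real.exp (y * (↑(k+1):ℝ)))
          * W (Dset L ((k+1) - 1))
        ≤ A * q ^ k := by
    intro k
    have hkk : (k+1) - 1 = k := rfl
    have hid : Real.exp (y * ((↑(k+1):ℝ)+1)) - Real.exp (y * ((↑(k+1):ℝ)))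
        = ((Real.exp y - 1) * Real.exp y) * (Real.exp y) ^ k := by
      push_cast
      rw [show y * ((k:ℝ) + 1 + 1) = (k:ℝ)*y + (y+y) by ring,
        show y * ((k:ℝ) + 1) = (k:ℝ)*y + y by ring,
        Real.exp_add, Real.exp_add, Real.exp_add, ← Real.exp_nat_mul]
      ring
    rw [hkk, hid]
    calc ENNReal.ofReal (((Real.exp y - 1) * Real.exp y) * (Real.exp y) ^ k) * W (Dset L k)
        ≤ (A * ENNReal.ofReal (Real.exp y) ^ k) * ENNReal.ofReal (1 - (L:ℝ) * r ^ L / 3) ^ k := by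
          rw [ENNReal.ofReal_mul hAnn, ENNReal.ofReal_pow (Real.exp_nonneg y)]
          exact mul_le_mul' le_rfl (hdsetb k)
      _ = A * (ENNReal.ofReal (Real.exp y) * ENNReal.ofReal (1 - (L:ℝ) * r ^ L / 3)) ^ k := by
          rw [mul_assoc, ← mul_pow]
      _ = A * (ENNReal.ofReal (Real.exp y * (1 - (L:ℝ) * r ^ L / 3))) ^ k := by
          rw [ENNReal.ofReal_mul (Real.exp_nonneg y)]
      _ ≤ A * q ^ k :=
          mul_le_mul' le_rfl (pow_le_pow_left' (ENNReal.ofReal_le_ofReal hN3) k)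
  have hq17 : ENNReal.ofReal ((L:ℝ) * r ^ L / 7) ≤ 1 - q := by
    have h9 : ENNReal.ofReal (1 - Real.exp (-y)) = 1 - q := by
      rw [hqdef, ENNReal.ofReal_sub _ (Real.exp_nonneg _), ENNReal.ofReal_one]
    rw [← h9]
    apply ENNReal.ofReal_le_ofReal
    linarith
  have hS : (∑' k:ℕ, ENNReal.ofReal
        (Real.exp (y * ((k:ℝ)+1)) - Real.exp (y * (k:ℝ))) * W (Dset L (k-1)))
      ≤ ENNReal.ofReal ((L:ℝ) * r ^ L / 3) + A * (ENNReal.ofReal ((L:ℝ) * r ^ L / 7))⁻¹ := by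
    rw [tsum_eq_zero_add' ENNReal.summable]
    refine add_le_add ?_ ?_
    · have hD0 : Dset L 0 = Set.univ := by simp [Dset]
      have hz : (0:ℕ) - 1 = 0 := rfl
      rw [hz, hD0, measure_univ, mul_one]
      apply ENNReal.ofReal_le_ofReal
      simp only [Nat.cast_zero, mul_zero, Real.exp_zero, zero_add, mul_one]
      linarith
    · refine le_trans (ENNReal.tsum_le_tsum hterm) ?_
      rw [ENNReal.tsum_mul_left, ENNReal.tsum_geometric]
      exact mul_le_mul' le_rfl (ENNReal.inv_le_inv' hq17)
  have hApart : A * (ENNReal.ofReal ((L:ℝ) * r ^ L / 7))⁻¹ ≤ ENNReal.ofReal 5 := by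
    rw [← ENNReal.ofReal_inv_of_pos (by linarith), hAdef, ← ENNReal.ofReal_mul hAnn]
    apply ENNReal.ofReal_le_ofReal
    rw [show ((L:ℝ) * r ^ L / 7)⁻¹ = 7 / ((L:ℝ) * r ^ L) by field_simp]
    rw [mul_div_assoc']
    rw [div_le_iff₀ hx0]
    nlinarith [mul_le_mul hEm1 hE2 hEpos.le (by linarith : (0:ℝ) ≤ (L:ℝ) * r ^ L / 3)]
  have hfinal : ENNReal.ofReal ((L:ℝ) * r ^ L / 3) + A * (ENNReal.ofReal ((L:ℝ) * r ^ L / 7))⁻¹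
      ≤ ENNReal.ofReal 6 := by
    calc ENNReal.ofReal ((L:ℝ) * r ^ L / 3) + A * (ENNReal.ofReal ((L:ℝ) * r ^ L / 7))⁻¹
        ≤ ENNReal.ofReal 1 + ENNReal.ofReal 5 :=
          add_le_add (ENNReal.ofReal_le_ofReal (by linarith)) hApart
      _ = ENNReal.ofReal 6 := by
          rw [← ENNReal.ofReal_add (by norm_num) (by norm_num)]
          norm_num
  calc (1 : ENNReal) + ∑' k:ℕ, ENNReal.ofReal
        (Real.exp (y * ((k:ℝ)+1)) - Real.exp (y * (k:ℝ))) * W (Dset L (k-1))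
      ≤ 1 + (ENNReal.ofReal ((L:ℝ) * r ^ L / 3)
          + A * (ENNReal.ofReal ((L:ℝ) * r ^ L / 7))⁻¹) := add_le_add le_rfl hS
    _ ≤ 1 + ENNReal.ofReal 6 := add_le_add le_rfl hfinal
    _ = ENNReal.ofReal 7 := by
        rw [← ENNReal.ofReal_one, ← ENNReal.ofReal_add (by norm_num) (by norm_num)]
        norm_num
end

section
/- Let U > 0, V > 0 and ρ ∈ (0, 1), and set c₃ = (4/U²)·ρ·(1 − ρ)·(2ρ − 1)·f(U, V). Then c₃ > 0 if ρ < 1/2, c₃ = 0 if ρ = 1/2, and c₃ < 0 if ρ > 1/2. -/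
/-- `f(U,V) = (2U+V)/√(V²+2UV) − (2U+2V)/√(V²+UV) + 1`. -/
noncomputable def fUV (U V : ℝ) : ℝ :=
  (2 * U + V) / Real.sqrt (V ^ 2 + 2 * U * V)
    - (2 * U + 2 * V) / Real.sqrt (V ^ 2 + U * V) + 1

lemma fUV_neg (U V : ℝ) (hU : 0 < U) (hV : 0 < V) : fUV U V < 0 := by
  have ha0 : (0:ℝ) < 2 * U + V := by linarith
  have hb0 : (0:ℝ) < U + V := by linarith
  set a := Real.sqrt (2 * U + V) with ha
  set b := Real.sqrt (U + V) with hb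
  set c := Real.sqrt V with hc
  have hap : 0 < a := Real.sqrt_pos.mpr ha0
  have hbp : 0 < b := Real.sqrt_pos.mpr hb0
  have hcp : 0 < c := Real.sqrt_pos.mpr hV
  have ha2 : a * a = 2 * U + V := Real.mul_self_sqrt ha0.le
  have hb2 : b * b = U + V := Real.mul_self_sqrt hb0.le
  have hc2 : c * c = V := Real.mul_self_sqrt hV.le
  have h1 : Real.sqrt (V ^ 2 + 2 * U * V) = c * a := by
    rw [hc, ha, ← Real.sqrt_mul hV.le]; ring_nf
  have h2 : Real.sqrt (V ^ 2 + U * V) = c * b := by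
    rw [hc, hb, ← Real.sqrt_mul hV.le]; ring_nf
  have hca : c < a := by
    rw [hc, ha]; exact Real.sqrt_lt_sqrt hV.le (by linarith)
  have key : a + c < 2 * b := by
    nlinarith [mul_pos (sub_pos.mpr hca) (sub_pos.mpr hca), mul_pos hap hcp,
      mul_pos hap hbp, mul_pos hbp hcp]
  have hrw : fUV U V = (a - 2 * b + c) / c := by
    unfold fUV
    rw [h1, h2, ← ha2, show 2 * U + 2 * V = 2 * (b * b) by rw [hb2]; ring]
    field_simp
  rw [hrw]
  apply div_neg_of_neg_of_pos _ hcp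
  linarith

/-- the sign of `c₃ = (4/U²)·ρ(1−ρ)(2ρ−1)·f(U,V)` is determined by
the position of `ρ` relative to `1/2`. -/
theorem c3_sign
    (U V ρ : ℝ) (hU : 0 < U) (hV : 0 < V) (hρ0 : 0 < ρ) (hρ1 : ρ < 1)
    (c₃ : ℝ) (hc₃ : c₃ = (4 / U ^ 2) * ρ * (1 - ρ) * (2 * ρ - 1) * fUV U V) :
    (ρ < 1 / 2 → 0 < c₃) ∧ (ρ = 1 / 2 → c₃ = 0) ∧ (1 / 2 < ρ → c₃ < 0) := by
  have hf := fUV_neg U V hU hV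
  have hU2 : (0:ℝ) < 4 / U ^ 2 := by positivity
  refine ⟨fun h => ?_, fun h => ?_, fun h => ?_⟩
  · rw [hc₃]
    have : (0:ℝ) < -(2 * ρ - 1) * -fUV U V := by
      apply mul_pos <;> linarith
    nlinarith [mul_pos hU2 (mul_pos hρ0 (by linarith : (0:ℝ) < 1 - ρ))]
  · rw [hc₃, h]; ring
  · rw [hc₃]
    have : (0:ℝ) < (2 * ρ - 1) * -fUV U V := by
      apply mul_pos <;> linarith
    nlinarith [mul_pos hU2 (mul_pos hρ0 (by linarith : (0:ℝ) < 1 - ρ))]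
end
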